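/- Let X = {(2^m, 2^k) : m, k ∈ ℤ, m ≥ 0, k ≥ 0} ⊆ ℕ² and E = {(a,b) ∈ ℕ² : b ≤ log₂ a} ∪ {(a,b) ∈ ℕ² : a ≤ log₂ b}. For every integer M > 2^64 there exist z₀, w₀ such that the square S_M = {(t₁,t₂) ∈ ℕ² : z₀ ≤ t₁ ≤ z₀ + M, w₀ ≤ t₂ ≤ w₀ + M} satisfies S_M ⊆ E and |FS(X) ∩ S_M| ≥ (1/4)·M·log₂ M. -/

import Mathlib

open scoped BigOperators

/-- `FS X` is the set of all sums of finitely many distinct elements of `X`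
(sums over finite nonempty subsets of `X`). -/
def FS {α : Type*} [AddCommMonoid α] (X : Set α) : Set α :=
  {s | ∃ F : Finset α, F.Nonempty ∧ ↑F ⊆ X ∧ s = ∑ x ∈ F, x}

/-- `X = {(2^m, 2^k) : m, k ≥ 0}`. -/
def X2 : Set (ℕ × ℕ) := {p | ∃ m k : ℕ, p = (2 ^ m, 2 ^ k)}

/-- The exceptional set `E = {(a,b) : b ≤ log₂ a} ∪ {(a,b) : a ≤ log₂ b}` (in ℕ²). -/
def E2 : Set (ℕ × ℕ) := {p | (1 ≤ p.1 ∧ 1 ≤ p.2) ∧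
  ((p.2 : ℝ) ≤ Real.logb 2 p.1 ∨ (p.1 : ℝ) ≤ Real.logb 2 p.2)}

/-- bit set of j -/
def Bf (j : ℕ) : Finset ℕ := j.bitIndices.toFinset

lemma Bf_sum (j : ℕ) : ∑ i ∈ Bf j, 2 ^ i = j := Finset.twoPowSum_toFinset_bitIndices j

lemma Bf_lt {j a : ℕ} (hj : j < 2 ^ a) : ∀ i ∈ Bf j, i < a := by
  intro i hi
  have h2 : 2 ^ i ≤ j := Nat.two_pow_le_of_mem_bitIndices (List.mem_toFinset.mp hi)
  exact (Nat.pow_lt_pow_iff_right one_lt_two).mp (lt_of_le_of_lt h2 hj)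

lemma two_pow_sum_range (a : ℕ) : ∑ i ∈ Finset.range a, 2 ^ i = 2 ^ a - 1 := by
  induction a with
  | zero => simp
  | succ n ih =>
    rw [Finset.sum_range_succ, ih]
    have : 1 ≤ 2 ^ n := Nat.one_le_two_pow
    have : 2 ^ (n+1) = 2 * 2 ^ n := by ring
    omega

/-- reversed bit sum -/
def Rf (a j : ℕ) : ℕ := ∑ i ∈ Bf j, 2 ^ (a - 1 - i)

lemma Rf_le {a j : ℕ} (hj : j < 2 ^ a) : Rf a j ≤ 2 ^ a - 1 := by
  have hsub : Bf j ⊆ Finset.range a := fun i hi => Finset.mem_range.mpr (Bf_lt hj i hi)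
  calc Rf a j ≤ ∑ i ∈ Finset.range a, 2 ^ (a - 1 - i) :=
        Finset.sum_le_sum_of_subset hsub
    _ = ∑ i ∈ Finset.range a, 2 ^ i := Finset.sum_range_reflect (fun i => 2 ^ i) a
    _ = 2 ^ a - 1 := two_pow_sum_range a

lemma pow_inj_nat {i j : ℕ} (h : (2:ℕ) ^ i = 2 ^ j) : i = j :=
  Nat.pow_right_injective (le_refl 2) h

/-- the Finset witnessing FS membership -/
def Ff (MM a b b' j : ℕ) : Finset (ℕ × ℕ) :=
  insert (2 ^ (MM + 3), 2 ^ b)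
    (insert (2 ^ (MM + 2), 2 ^ b') ((Bf j).image fun i => (2 ^ i, 2 ^ (a - 1 - i))))

lemma Ff_sum {MM a j : ℕ} (b b' : ℕ) (hj : j < 2 ^ a) (ha : a ≤ MM + 1) :
    ∑ x ∈ Ff MM a b b' j, x = (2 ^ (MM + 3) + 2 ^ (MM + 2) + j, 2 ^ b + (2 ^ b' + Rf a j)) := by
  have hinj : Set.InjOn (fun i => ((2 ^ i, 2 ^ (a - 1 - i)) : ℕ × ℕ)) (Bf j) := by
    intro x _ y _ h
    exact pow_inj_nat (congrArg Prod.fst h)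
  have hnotim : ∀ c : ℕ, MM + 2 ≤ c → ∀ b'' : ℕ,
      ((2:ℕ) ^ c, (2:ℕ) ^ b'') ∉ (Bf j).image fun i => ((2 ^ i, 2 ^ (a - 1 - i)) : ℕ × ℕ) := by
    intro c hc b'' hmem
    obtain ⟨i, hi, heq⟩ := Finset.mem_image.mp hmem
    have : (2:ℕ) ^ i = 2 ^ c := congrArg Prod.fst heq
    have : i = c := pow_inj_nat this
    have := Bf_lt hj i hi
    omega
  have h2 : ((2:ℕ) ^ (MM + 2), (2:ℕ) ^ b') ∉
      (Bf j).image fun i => ((2 ^ i, 2 ^ (a - 1 - i)) : ℕ × ℕ) := hnotim _ le_rfl _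
  have h1 : ((2:ℕ) ^ (MM + 3), (2:ℕ) ^ b) ∉
      insert ((2:ℕ) ^ (MM + 2), (2:ℕ) ^ b')
        ((Bf j).image fun i => ((2 ^ i, 2 ^ (a - 1 - i)) : ℕ × ℕ)) := by
    intro hmem
    rcases Finset.mem_insert.mp hmem with h | h
    · have : (2:ℕ) ^ (MM + 3) = 2 ^ (MM + 2) := congrArg Prod.fst h
      have := pow_inj_nat this; omega
    · exact hnotim _ (by omega) _ h
  rw [Ff, Finset.sum_insert h1, Finset.sum_insert h2, Finset.sum_image hinj]
  have hfst : (∑ i ∈ Bf j, ((2 ^ i, 2 ^ (a - 1 - i)) : ℕ × ℕ)) = (j, Rf a j) := by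
    rw [Prod.ext_iff]
    constructor
    · rw [Prod.fst_sum]; exact Bf_sum j
    · rw [Prod.snd_sum]; rfl
  rw [hfst]
  rw [Prod.ext_iff]
  constructor <;> simp <;> ring

lemma Ff_mem_FS {MM a j : ℕ} (b b' : ℕ) (hj : j < 2 ^ a) (ha : a ≤ MM + 1) :
    ((2 ^ (MM + 3) + 2 ^ (MM + 2) + j, 2 ^ b + (2 ^ b' + Rf a j)) : ℕ × ℕ) ∈ FS X2 := by
  refine ⟨Ff MM a b b' j, ⟨_, Finset.mem_insert_self _ _⟩, ?_, (Ff_sum b b' hj ha).symm⟩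
  intro p hp
  simp only [Ff, Finset.coe_insert, Set.mem_insert_iff, Finset.coe_image, Set.mem_image] at hp
  rcases hp with h | h | ⟨i, _, h⟩
  · exact ⟨MM + 3, b, h⟩
  · exact ⟨MM + 2, b', h⟩
  · exact ⟨i, a - 1 - i, h.symm⟩

/-- For every `M > 2^64` there is an `M × M` square inside `E` containing at least
`(1/4)·M·log₂ M` points of `FS(X)`. -/
theorem stmt_8 (M : ℕ) (hM : 2 ^ 64 < M) :
    ∃ z₀ w₀ : ℕ, 1 ≤ z₀ ∧ 1 ≤ w₀ ∧
      {p : ℕ × ℕ | z₀ ≤ p.1 ∧ p.1 ≤ z₀ + M ∧ w₀ ≤ p.2 ∧ p.2 ≤ w₀ + M} ⊆ E2 ∧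
      (1 / 4 : ℝ) * M * Real.logb 2 M ≤
        (((FS X2 ∩ {p : ℕ × ℕ | z₀ ≤ p.1 ∧ p.1 ≤ z₀ + M ∧ w₀ ≤ p.2 ∧ p.2 ≤ w₀ + M}).ncard : ℝ)) := by
  have hM0 : M ≠ 0 := by omega
  set L := Nat.log 2 M with hLdef
  have hL1 : 2 ^ L ≤ M := Nat.pow_log_le_self 2 hM0
  have hL2 : M < 2 ^ (L + 1) := Nat.lt_pow_succ_log_self one_lt_two M
  have hL64 : 64 ≤ L := (Nat.le_log_iff_pow_le one_lt_two hM0).mpr (le_of_lt hM)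
  set a := L - 1 with hadef
  set d := a / 2 with hddef
  have hd31 : 31 ≤ d := by omega
  have h2d : 2 * d ≤ a := by omega
  have haM : a ≤ M + 1 := by
    have : L < 2 ^ L := Nat.lt_two_pow_self
    omega
  have h2aM : 2 ^ a ≤ M := le_trans (Nat.pow_le_pow_right (by norm_num) (by omega)) hL1
  set z₀ := 2 ^ (M + 3) + 2 ^ (M + 2) with hz₀
  have hz1 : 1 ≤ z₀ := by
    have h1 : (1:ℕ) ≤ 2 ^ (M + 3) := Nat.one_le_two_pow
    have h2 : (1:ℕ) ≤ 2 ^ (M + 2) := Nat.one_le_two_pow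
    omega
  set S := {p : ℕ × ℕ | z₀ ≤ p.1 ∧ p.1 ≤ z₀ + M ∧ 1 ≤ p.2 ∧ p.2 ≤ 1 + M} with hS
  refine ⟨z₀, 1, hz1, le_refl 1, ?_, ?_⟩
  · -- square inside E2
    intro p hp
    obtain ⟨h1, h2, h3, h4⟩ := hp
    refine ⟨⟨le_trans hz1 h1, h3⟩, Or.inl ?_⟩
    have hp1 : (2:ℝ) ^ (M + 2) ≤ (p.1 : ℝ) := by
      have : 2 ^ (M + 2) ≤ p.1 := by
        have h5 : (1:ℕ) ≤ 2 ^ (M + 3) := Nat.one_le_two_pow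
        omega
      exact_mod_cast this
    have hlog : ((M : ℝ) + 2) ≤ Real.logb 2 p.1 := by
      calc ((M : ℝ) + 2) = Real.logb 2 ((2:ℝ) ^ (M + 2)) := by
            rw [Real.logb_pow, Real.logb_self_eq_one (by norm_num : (1:ℝ) < 2)]
            push_cast; ring
        _ ≤ Real.logb 2 p.1 :=
            Real.logb_le_logb_of_le (by norm_num) (by positivity) hp1
    have h4' : (p.2 : ℝ) ≤ 1 + (M : ℝ) := by exact_mod_cast h4
    linarith
  · -- counting
    set D := (Finset.range (2 ^ a)) ×ˢ ((Finset.Ico d (2 * d)) ×ˢ (Finset.range d)) with hD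
    set φ : ℕ × (ℕ × ℕ) → ℕ × ℕ :=
      fun q => (z₀ + q.1, 2 ^ q.2.1 + (2 ^ q.2.2 + Rf a q.1)) with hφ
    have hmem : ∀ q ∈ D, φ q ∈ FS X2 ∩ S := by
      rintro ⟨j, b, b'⟩ hq
      simp only [hD, Finset.mem_product, Finset.mem_range, Finset.mem_Ico] at hq
      obtain ⟨hj, ⟨hb1, hb2⟩, hb'⟩ := hq
      constructor
      · exact Ff_mem_FS b b' hj haM
      · refine ⟨le_add_right (le_refl z₀), ?_, ?_, ?_⟩
        · show z₀ + j ≤ z₀ + M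
          omega
        · show 1 ≤ 2 ^ b + (2 ^ b' + Rf a j)
          have h1 : (1:ℕ) ≤ 2 ^ b := Nat.one_le_two_pow
          have h2 : (1:ℕ) ≤ 2 ^ b' := Nat.one_le_two_pow
          omega
        · show 2 ^ b + (2 ^ b' + Rf a j) ≤ 1 + M
          have e1 : 2 ^ b ≤ 2 ^ (a - 1) := Nat.pow_le_pow_right (by norm_num) (by omega)
          have e2 : 2 ^ b' ≤ 2 ^ (a - 1) := Nat.pow_le_pow_right (by norm_num) (by omega)
          have e3 : Rf a j ≤ 2 ^ a - 1 := Rf_le hj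
          have e4 : 2 ^ a = 2 ^ (a - 1) * 2 := by
            rw [← pow_succ]; congr 1; omega
          have e5 : 2 ^ L = 2 ^ a * 2 := by
            rw [← pow_succ]; congr 1; omega
          have e6 : (1:ℕ) ≤ 2 ^ a := Nat.one_le_two_pow
          have e7 : (1:ℕ) ≤ 2 ^ b := Nat.one_le_two_pow
          have e8 : (1:ℕ) ≤ 2 ^ b' := Nat.one_le_two_pow
          have e9 : (1:ℕ) ≤ 2 ^ (a - 1) := Nat.one_le_two_pow
          omega
    have hinj : Set.InjOn φ D := by
      rintro ⟨j, b, b'⟩ hq ⟨j', c, c'⟩ hq' heq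
      simp only [hD, Finset.mem_coe, Finset.mem_product, Finset.mem_range, Finset.mem_Ico] at hq hq'
      obtain ⟨hj, ⟨hb1, hb2⟩, hb'⟩ := hq
      obtain ⟨hj', ⟨hc1, hc2⟩, hc'⟩ := hq'
      simp only [hφ, Prod.mk.injEq] at heq
      obtain ⟨h1, h2⟩ := heq
      have hjj : j = j' := by omega
      subst hjj
      have h3 : 2 ^ b + 2 ^ b' = 2 ^ c + 2 ^ c' := by omega
      have hbb' : b' < b := by omega
      have hcc' : c' < c := by omega
      have hbc : b = c := by
        by_contra hne
        rcases Nat.lt_or_ge b c with hlt | hge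
        · have k1 : 2 ^ b' < 2 ^ b := Nat.pow_lt_pow_right one_lt_two hbb'
          have k2 : 2 ^ b * 2 ≤ 2 ^ c := by
            rw [← pow_succ]
            exact Nat.pow_le_pow_right (by norm_num) hlt
          have k3 : (1:ℕ) ≤ 2 ^ c' := Nat.one_le_two_pow
          have k4 : (1:ℕ) ≤ 2 ^ b' := Nat.one_le_two_pow
          omega
        · have hlt : c < b := by omega
          have k1 : 2 ^ c' < 2 ^ c := Nat.pow_lt_pow_right one_lt_two hcc'
          have k2 : 2 ^ c * 2 ≤ 2 ^ b := by
            rw [← pow_succ]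
            exact Nat.pow_le_pow_right (by norm_num) hlt
          have k3 : (1:ℕ) ≤ 2 ^ c' := Nat.one_le_two_pow
          have k4 : (1:ℕ) ≤ 2 ^ b' := Nat.one_le_two_pow
          omega
      subst hbc
      have hpp : (2:ℕ) ^ b' = 2 ^ c' := by omega
      have : b' = c' := pow_inj_nat hpp
      simp [this]
    have hfin : (FS X2 ∩ S).Finite := by
      apply Set.Finite.subset (Set.finite_Icc ((z₀, 1) : ℕ × ℕ) ((z₀ + M, 1 + M)))
      rintro ⟨x, y⟩ ⟨_, hx⟩
      exact ⟨⟨hx.1, hx.2.2.1⟩, ⟨hx.2.1, hx.2.2.2⟩⟩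
    have hsub : ↑(D.image φ) ⊆ FS X2 ∩ S := by
      intro p hp
      obtain ⟨q, hq, rfl⟩ := Finset.mem_coe.mp hp |> Finset.mem_image.mp
      exact hmem q hq
    have hcard : (D.image φ).card = 2 ^ a * (d * d) := by
      rw [Finset.card_image_of_injOn (by exact_mod_cast hinj)]
      simp [hD, Nat.card_Ico]
      omega
    have hcount : 2 ^ a * (d * d) ≤ (FS X2 ∩ S).ncard := by
      rw [← hcard, ← Set.ncard_coe_finset]
      exact Set.ncard_le_ncard hsub hfin
    -- real inequality
    have hlogM : Real.logb 2 M ≤ (L : ℝ) + 1 := by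
      calc Real.logb 2 M ≤ Real.logb 2 ((2:ℝ) ^ (L + 1)) := by
            apply Real.logb_le_logb_of_le (by norm_num)
              (by exact_mod_cast Nat.pos_of_ne_zero hM0)
            exact_mod_cast le_of_lt hL2
        _ = (L : ℝ) + 1 := by
            rw [Real.logb_pow, Real.logb_self_eq_one (by norm_num : (1:ℝ) < 2)]
            push_cast; ring
    have hMR : (M : ℝ) ≤ (2:ℝ) ^ (L + 1) := by exact_mod_cast le_of_lt hL2
    have hdd : L + 1 ≤ d * d := by
      calc L + 1 ≤ 31 * d := by omega
        _ ≤ d * d := Nat.mul_le_mul_right d hd31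
    have hpowR : (2:ℝ) ^ (L + 1) = 4 * (2:ℝ) ^ a := by
      have h : L + 1 = a + 2 := by omega
      rw [h, pow_add]; ring
    calc (1 / 4 : ℝ) * M * Real.logb 2 M ≤ (1 / 4 : ℝ) * M * ((L : ℝ) + 1) := by
          apply mul_le_mul_of_nonneg_left hlogM; positivity
      _ ≤ (1 / 4 : ℝ) * ((2:ℝ) ^ (L + 1)) * ((L : ℝ) + 1) := by
          apply mul_le_mul_of_nonneg_right _ (by positivity)
          apply mul_le_mul_of_nonneg_left hMR; norm_num
      _ = ((2:ℝ) ^ a) * ((L : ℝ) + 1) := by rw [hpowR]; ring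
      _ ≤ ((2 ^ a * (d * d) : ℕ) : ℝ) := by
          push_cast
          apply mul_le_mul_of_nonneg_left _ (by positivity)
          exact_mod_cast hdd
      _ ≤ ((FS X2 ∩ S).ncard : ℝ) := by exact_mod_cast hcount
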